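/- Let ι be a finite type and T ≥ 1 an integer. For t = 1,…,T let I_t : ι → {0,1} and ℓ_t, ℓ'_t : ι → [0,1]. Let N_t(i) = Σ_{τ=1}^{t} I_τ(i), and define the empirical-mean predictors m_t(i) = (Σ_{τ=1}^{t−1} I_τ(i)·ℓ_τ(i)) / max(1, N_{t−1}(i)) and m'_t(i) = (Σ_{τ=1}^{t−1} I_τ(i)·ℓ'_τ(i)) / max(1, N_{t−1}(i)). Then: Σ_{t=1}^{T} Σ_{i∈ι} I_t(i)·(m'_t(i) − m_t(i))² ≤ (2 + ln T)·Σ_{t=1}^{T} Σ_{i∈ι} I_t(i)·|ℓ'_t(i) − ℓ_t(i)|. -/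

import Mathlib

noncomputable def harm : ℕ → ℝ
  | 0 => 0
  | n + 1 => harm n + 1 / max 1 (n : ℝ)

lemma harm_succ (n : ℕ) : harm (n + 1) = harm n + 1 / max 1 (n : ℝ) := rfl

lemma harm_one_add_le (k : ℕ) (hk : 1 ≤ k) : harm (k + 1) ≤ 2 + Real.log k := by
  induction k with
  | zero => omega
  | succ m ih =>
    rcases Nat.lt_or_ge m 1 with h1 | hm
    · have : m = 0 := by omega
      subst this
      norm_num [harm]
    · have ihm := ih hm
      rw [harm_succ]
      have hmpos : (0 : ℝ) < m := by exact_mod_cast hm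
      have hmax : max 1 ((m + 1 : ℕ) : ℝ) = ((m : ℝ) + 1) := by
        push_cast; rw [max_eq_right]; linarith
      have hlog : 1 / ((m : ℝ) + 1) ≤ Real.log ((m : ℝ) + 1) - Real.log m := by
        have hx : (0 : ℝ) < (m : ℝ) / ((m : ℝ) + 1) := by positivity
        have h := Real.log_le_sub_one_of_pos hx
        rw [Real.log_div (by positivity) (by positivity)] at h
        have h2 : (m : ℝ) / ((m : ℝ) + 1) - 1 = -(1 / ((m : ℝ) + 1)) := by
          field_simp
          ring
        linarith
      rw [hmax]
      push_cast
      linarith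

lemma harm_le (n T : ℕ) (hT : 1 ≤ T) (hn : n ≤ T) : harm n ≤ 2 + Real.log T := by
  have hlogT : 0 ≤ Real.log T := Real.log_nonneg (by exact_mod_cast hT)
  match n, hn with
  | 0, _ => norm_num [harm]; linarith
  | 1, _ =>
    have h1 : harm 1 = 1 := by norm_num [harm]
    linarith
  | (k + 2), hn =>
    have h := harm_one_add_le (k + 1) (by omega)
    have hle : Real.log ((k + 1 : ℕ) : ℝ) ≤ Real.log T := by
      apply Real.log_le_log (by positivity)
      exact_mod_cast (by omega : k + 1 ≤ T)
    push_cast at h hle ⊢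
    linarith

lemma visit_harmonic (T : ℕ) (I : ℕ → ℝ)
    (hI : ∀ t ∈ Finset.Icc 1 T, I t = 0 ∨ I t = 1) :
    ∃ n : ℕ, n ≤ T ∧ (∑ τ ∈ Finset.Icc 1 T, I τ) = n ∧
      ∑ t ∈ Finset.Icc 1 T, I t / max 1 (∑ τ ∈ Finset.Icc 1 (t - 1), I τ) ≤ harm n := by
  induction T with
  | zero => exact ⟨0, le_refl 0, by simp, by simp [harm]⟩
  | succ T ih =>
    obtain ⟨n, hnT, hsum, hle⟩ := ih (fun t ht => hI t (by
      rw [Finset.mem_Icc] at ht ⊢; omega))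
    have hsplit : ∀ f : ℕ → ℝ,
        ∑ t ∈ Finset.Icc 1 (T + 1), f t = (∑ t ∈ Finset.Icc 1 T, f t) + f (T + 1) :=
      fun f => Finset.sum_Icc_succ_top (by omega) f
    rcases hI (T + 1) (Finset.mem_Icc.mpr ⟨by omega, le_refl _⟩) with h0 | h1
    · refine ⟨n, by omega, ?_, ?_⟩
      · rw [hsplit, h0, add_zero, hsum]
      · rw [hsplit, h0, zero_div, add_zero]; exact hle
    · refine ⟨n + 1, by omega, ?_, ?_⟩
      · rw [hsplit, h1, hsum]; push_cast; ring
      · rw [hsplit, h1]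
        simp only [Nat.add_sub_cancel]
        rw [hsum, harm_succ]
        linarith

/-- Corruption bound for empirical-mean predictors: with visitation indicators
`I t i ∈ {0,1}`, visit counts `N t i = ∑_{τ=1}^{t} I τ i`, and empirical means
`m`/`m'` of the losses `ℓ`/`ℓ'` along visited coordinates, the cumulative squared gap
between the two predictors on visited coordinates is bounded by `(2 + ln T)` times
the total corruption `∑_t ∑_i I t i · |ℓ' t i - ℓ t i|`. -/
theorem empirical_mean_corruption
    {ι : Type*} [Fintype ι] (T : ℕ) (hT : 1 ≤ T)
    (ℓ ℓ' : ℕ → ι → ℝ) (I : ℕ → ι → ℝ)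
    (hℓ : ∀ t ∈ Finset.Icc 1 T, ∀ i, ℓ t i ∈ Set.Icc (0 : ℝ) 1)
    (hℓ' : ∀ t ∈ Finset.Icc 1 T, ∀ i, ℓ' t i ∈ Set.Icc (0 : ℝ) 1)
    (hI : ∀ t ∈ Finset.Icc 1 T, ∀ i, I t i = 0 ∨ I t i = 1)
    (N : ℕ → ι → ℝ) (hN : ∀ t, ∀ i, N t i = ∑ τ ∈ Finset.Icc 1 t, I τ i)
    (m m' : ℕ → ι → ℝ)
    (hm : ∀ t ∈ Finset.Icc 1 T, ∀ i,
      m t i = (∑ τ ∈ Finset.Icc 1 (t - 1), I τ i * ℓ τ i) / max 1 (N (t - 1) i))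
    (hm' : ∀ t ∈ Finset.Icc 1 T, ∀ i,
      m' t i = (∑ τ ∈ Finset.Icc 1 (t - 1), I τ i * ℓ' τ i) / max 1 (N (t - 1) i)) :
    ∑ t ∈ Finset.Icc 1 T, ∑ i, I t i * (m' t i - m t i) ^ 2 ≤
      (2 + Real.log T) * ∑ t ∈ Finset.Icc 1 T, ∑ i, I t i * |ℓ' t i - ℓ t i| := by
  have hInn : ∀ t ∈ Finset.Icc 1 T, ∀ i, 0 ≤ I t i := by
    intro t ht i; rcases hI t ht i with h | h <;> rw [h] <;> norm_num
  rw [show (∑ t ∈ Finset.Icc 1 T, ∑ i, I t i * (m' t i - m t i) ^ 2)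
        = ∑ i, ∑ t ∈ Finset.Icc 1 T, I t i * (m' t i - m t i) ^ 2 from Finset.sum_comm,
      show (∑ t ∈ Finset.Icc 1 T, ∑ i, I t i * |ℓ' t i - ℓ t i|)
        = ∑ i, ∑ t ∈ Finset.Icc 1 T, I t i * |ℓ' t i - ℓ t i| from Finset.sum_comm,
      Finset.mul_sum]
  apply Finset.sum_le_sum
  intro i _
  set S := ∑ t ∈ Finset.Icc 1 T, I t i * |ℓ' t i - ℓ t i| with hSdef
  have hS0 : 0 ≤ S :=
    Finset.sum_nonneg fun t ht => mul_nonneg (hInn t ht i) (abs_nonneg _)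
  have key : ∀ t ∈ Finset.Icc 1 T,
      I t i * (m' t i - m t i) ^ 2 ≤ S * (I t i / max 1 (N (t - 1) i)) := by
    intro t ht
    rcases hI t ht i with h0 | h1
    · simp [h0]
    · rw [h1, one_mul, mul_one_div]
      set D := max 1 (N (t - 1) i) with hDdef
      have hD1 : (1 : ℝ) ≤ D := le_max_left _ _
      have hDpos : (0 : ℝ) < D := lt_of_lt_of_le one_pos hD1
      have htT := Finset.mem_Icc.mp ht
      have hsub : Finset.Icc 1 (t - 1) ⊆ Finset.Icc 1 T :=
        Finset.Icc_subset_Icc_right (by omega)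
      -- |m' - m| ≤ S / D
      have habs : |m' t i - m t i| ≤ S / D := by
        rw [hm' t ht i, hm t ht i, div_sub_div_same, abs_div, abs_of_pos hDpos]
        rw [div_le_div_iff_of_pos_right hDpos, ← Finset.sum_sub_distrib]
        calc |∑ τ ∈ Finset.Icc 1 (t - 1), (I τ i * ℓ' τ i - I τ i * ℓ τ i)|
            ≤ ∑ τ ∈ Finset.Icc 1 (t - 1), |I τ i * ℓ' τ i - I τ i * ℓ τ i| :=
              Finset.abs_sum_le_sum_abs _ _
          _ = ∑ τ ∈ Finset.Icc 1 (t - 1), I τ i * |ℓ' τ i - ℓ τ i| := by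
              apply Finset.sum_congr rfl
              intro τ hτ
              rw [← mul_sub, abs_mul, abs_of_nonneg (hInn τ (hsub hτ) i)]
          _ ≤ S := Finset.sum_le_sum_of_subset_of_nonneg hsub
              (fun τ hτ _ => mul_nonneg (hInn τ hτ i) (abs_nonneg _))
      -- m and m' are in [0,1]
      have hbound : ∀ (L : ℕ → ι → ℝ), (∀ τ ∈ Finset.Icc 1 T, ∀ j, L τ j ∈ Set.Icc (0:ℝ) 1) →
          (∑ τ ∈ Finset.Icc 1 (t - 1), I τ i * L τ i) / D ∈ Set.Icc (0:ℝ) 1 := by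
        intro L hL
        constructor
        · apply div_nonneg _ hDpos.le
          exact Finset.sum_nonneg fun τ hτ =>
            mul_nonneg (hInn τ (hsub hτ) i) (hL τ (hsub hτ) i).1
        · rw [div_le_one hDpos]
          calc ∑ τ ∈ Finset.Icc 1 (t - 1), I τ i * L τ i
              ≤ ∑ τ ∈ Finset.Icc 1 (t - 1), I τ i := by
                apply Finset.sum_le_sum
                intro τ hτ
                exact mul_le_of_le_one_right (hInn τ (hsub hτ) i) (hL τ (hsub hτ) i).2
            _ = N (t - 1) i := (hN (t - 1) i).symm
            _ ≤ D := le_max_right _ _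
      have hm01 : m t i ∈ Set.Icc (0:ℝ) 1 := by
        rw [hm t ht i]; exact hbound ℓ hℓ
      have hm'01 : m' t i ∈ Set.Icc (0:ℝ) 1 := by
        rw [hm' t ht i]; exact hbound ℓ' hℓ'
      have habs1 : |m' t i - m t i| ≤ 1 := by
        rw [abs_le]
        constructor <;> [linarith [hm01.2, hm'01.1]; linarith [hm01.1, hm'01.2]]
      calc (m' t i - m t i) ^ 2 = |m' t i - m t i| * |m' t i - m t i| := by
            rw [abs_mul_abs_self]; ring
        _ ≤ 1 * (S / D) := mul_le_mul habs1 habs (abs_nonneg _) zero_le_one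
        _ = S / D := one_mul _
  calc ∑ t ∈ Finset.Icc 1 T, I t i * (m' t i - m t i) ^ 2
      ≤ ∑ t ∈ Finset.Icc 1 T, S * (I t i / max 1 (N (t - 1) i)) :=
        Finset.sum_le_sum key
    _ = S * ∑ t ∈ Finset.Icc 1 T, I t i / max 1 (N (t - 1) i) := by
        rw [Finset.mul_sum]
    _ ≤ S * (2 + Real.log T) := by
        obtain ⟨n, hnT, hsum, hle⟩ :=
          visit_harmonic T (fun t => I t i) (fun t ht => hI t ht i)
        apply mul_le_mul_of_nonneg_left _ hS0
        refine le_trans ?_ (harm_le n T hT hnT)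
        simpa only [hN] using hle
    _ = (2 + Real.log T) * S := mul_comm _ _
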